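/- If p₁ < p₂ < ⋯ < p_k are primes, then L(p₁p₂⋯p_k) ≤ min over 0 ≤ j ≤ k of 2^{k−j}·(log(p₁⋯p_j) + log 2), where the empty product p₁⋯p_0 equals 1. -/

import Mathlib

open MeasureTheory Pointwise

/-- `𝓛(a) = ⋃_{d ∣ a} [log d - log 2, log d)`. -/
def Lset (a : ℕ) : Set ℝ :=
  ⋃ d ∈ Nat.divisors a, Set.Ico (Real.log d - Real.log 2) (Real.log d)

/-- `L(a)`: the Lebesgue measure of `𝓛(a)`. -/
noncomputable def Lfun (a : ℕ) : ℝ := (MeasureTheory.volume (Lset a)).toReal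

lemma Lset_subset (a : ℕ) : Lset a ⊆ Set.Ico (-(Real.log 2)) (Real.log a) := by
  intro x hx
  simp only [Lset, Set.mem_iUnion, Set.mem_Ico] at hx
  obtain ⟨d, hd, h1, h2⟩ := hx
  rw [Nat.mem_divisors] at hd
  have hd1 : 1 ≤ d := Nat.one_le_iff_ne_zero.2 fun h => hd.2 (by simpa [h] using hd.1)
  have hlogd : 0 ≤ Real.log d := Real.log_nonneg (by exact_mod_cast hd1)
  have hda : d ≤ a := Nat.le_of_dvd (Nat.pos_of_ne_zero hd.2) hd.1
  have : Real.log d ≤ Real.log a :=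
    Real.log_le_log (by exact_mod_cast hd1) (by exact_mod_cast hda)
  constructor
  · linarith
  · linarith

lemma volume_Lset_le (a : ℕ) :
    volume (Lset a) ≤ ENNReal.ofReal (Real.log a + Real.log 2) := by
  calc volume (Lset a) ≤ volume (Set.Ico (-(Real.log 2)) (Real.log a)) :=
        measure_mono (Lset_subset a)
    _ = ENNReal.ofReal (Real.log a - (-(Real.log 2))) := Real.volume_Ico
    _ = ENNReal.ofReal (Real.log a + Real.log 2) := by ring_nf

lemma Lset_mul_prime_subset (a q : ℕ) (hq : q.Prime) :
    Lset (a * q) ⊆ Lset a ∪ (Real.log q +ᵥ Lset a) := by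
  intro x hx
  simp only [Lset, Set.mem_iUnion, Set.mem_Ico] at hx
  obtain ⟨d, hd, h1, h2⟩ := hx
  rw [Nat.mem_divisors] at hd
  obtain ⟨hdvd, hne⟩ := hd
  have ha : a ≠ 0 := fun h => hne (by simp [h])
  by_cases hqd : q ∣ d
  · obtain ⟨e, rfl⟩ := hqd
    have he : e ∣ a := by
      have : q * e ∣ q * a := by rwa [mul_comm a q] at hdvd
      exact (mul_dvd_mul_iff_left hq.pos.ne').mp this
    have hd0 : q * e ≠ 0 := ne_zero_of_dvd_ne_zero hne hdvd
    have he0 : e ≠ 0 := fun h => hd0 (by simp [h])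
    have hlog : Real.log (↑(q * e)) = Real.log q + Real.log e := by
      push_cast
      exact Real.log_mul (by exact_mod_cast hq.pos.ne') (by exact_mod_cast he0)
    right
    refine Set.mem_vadd_set.mpr ⟨x - Real.log q, ?_, by simp [vadd_eq_add]⟩
    simp only [Lset, Set.mem_iUnion, Set.mem_Ico]
    exact ⟨e, Nat.mem_divisors.2 ⟨he, ha⟩, by rw [hlog] at h1; linarith,
      by rw [hlog] at h2; linarith⟩
  · have hda : d ∣ a :=
      Nat.Coprime.dvd_of_dvd_mul_right ((hq.coprime_iff_not_dvd.mpr hqd).symm) hdvd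
    left
    simp only [Lset, Set.mem_iUnion, Set.mem_Ico]
    exact ⟨d, Nat.mem_divisors.2 ⟨hda, ha⟩, h1, h2⟩

lemma volume_Lset_mul_prime (a q : ℕ) (hq : q.Prime) :
    volume (Lset (a * q)) ≤ 2 * volume (Lset a) := by
  calc volume (Lset (a * q)) ≤ volume (Lset a ∪ (Real.log q +ᵥ Lset a)) :=
        measure_mono (Lset_mul_prime_subset a q hq)
    _ ≤ volume (Lset a) + volume (Real.log q +ᵥ Lset a) := measure_union_le _ _
    _ = volume (Lset a) + volume (Lset a) := by rw [measure_vadd]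
    _ = 2 * volume (Lset a) := by ring

lemma volume_Lset_mul_prod {k : ℕ} (p : Fin k → ℕ) (hp : ∀ i, (p i).Prime)
    (a : ℕ) (s : Finset (Fin k)) :
    volume (Lset (a * ∏ i ∈ s, p i)) ≤ 2 ^ s.card * volume (Lset a) := by
  induction s using Finset.induction with
  | empty => simp
  | insert _ _ hns ih =>
    rename_i i s
    rw [Finset.prod_insert hns, Finset.card_insert_of_notMem hns]
    calc volume (Lset (a * (p i * ∏ j ∈ s, p j)))
        = volume (Lset ((a * ∏ j ∈ s, p j) * p i)) := by ring_nf
      _ ≤ 2 * volume (Lset (a * ∏ j ∈ s, p j)) := volume_Lset_mul_prime _ _ (hp i)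
      _ ≤ 2 * (2 ^ s.card * volume (Lset a)) := by
          exact mul_le_mul_right ih 2
      _ = 2 ^ (s.card + 1) * volume (Lset a) := by ring

lemma card_filter_lt (k j : ℕ) (hj : j ≤ k) :
    (Finset.univ.filter fun i : Fin k => (i : ℕ) < j).card = j := by
  have : (Finset.univ.filter fun i : Fin k => (i : ℕ) < j) =
      (Finset.range j).attachFin (fun m hm => lt_of_lt_of_le (Finset.mem_range.mp hm) hj) := by
    ext i
    simp [Finset.mem_attachFin]
  rw [this, Finset.card_attachFin, Finset.card_range]

theorem Lfun_product_of_primes (k : ℕ) (p : Fin k → ℕ)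
    (hp : ∀ i, (p i).Prime) (hmono : StrictMono p) :
    ∀ j : ℕ, j ≤ k →
      Lfun (∏ i, p i) ≤
        2 ^ (k - j) *
          (Real.log ((∏ i ∈ Finset.univ.filter fun i : Fin k => (i : ℕ) < j, p i : ℕ) : ℝ) +
            Real.log 2) := by
  intro j hj
  set a : ℕ := ∏ i ∈ Finset.univ.filter fun i : Fin k => (i : ℕ) < j, p i with ha
  set s : Finset (Fin k) := Finset.univ.filter fun i : Fin k => ¬ (i : ℕ) < j with hs
  have hprod : (∏ i, p i) = a * ∏ i ∈ s, p i := by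
    rw [ha, hs, Finset.prod_filter_mul_prod_filter_not]
  have hcard : s.card = k - j := by
    have h1 : (Finset.univ.filter fun i : Fin k => (i : ℕ) < j).card + s.card = k := by
      have := Finset.card_filter_add_card_filter_not
        (s := (Finset.univ : Finset (Fin k))) (p := fun i : Fin k => (i : ℕ) < j)
      simpa [hs] using this
    rw [card_filter_lt k j hj] at h1
    omega
  have key : volume (Lset (∏ i, p i)) ≤
      2 ^ (k - j) * ENNReal.ofReal (Real.log a + Real.log 2) := by
    rw [hprod]
    calc volume (Lset (a * ∏ i ∈ s, p i)) ≤ 2 ^ s.card * volume (Lset a) :=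
          volume_Lset_mul_prod p hp a s
      _ ≤ 2 ^ (k - j) * ENNReal.ofReal (Real.log a + Real.log 2) := by
          rw [hcard]
          exact mul_le_mul_right (volume_Lset_le a) _
  have hloga : 0 ≤ Real.log a := by
    apply Real.log_nonneg
    have : 1 ≤ a := Nat.one_le_iff_ne_zero.2 (Finset.prod_ne_zero_iff.2 fun i _ => (hp i).pos.ne')
    exact_mod_cast this
  have hlog2 : (0:ℝ) ≤ Real.log 2 := Real.log_nonneg one_le_two
  have hfin : (2:ENNReal) ^ (k - j) * ENNReal.ofReal (Real.log a + Real.log 2) ≠ ⊤ := by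
    exact ENNReal.mul_ne_top (by simp) ENNReal.ofReal_ne_top
  have := ENNReal.toReal_mono hfin key
  rw [Lfun]
  calc (volume (Lset (∏ i, p i))).toReal
      ≤ ((2:ENNReal) ^ (k - j) * ENNReal.ofReal (Real.log a + Real.log 2)).toReal := this
    _ = 2 ^ (k - j) * (Real.log a + Real.log 2) := by
        rw [ENNReal.toReal_mul, ENNReal.toReal_pow, ENNReal.toReal_ofReal (by linarith)]
        norm_num
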